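/- Let β ∈ [1,2] and let f : [0,1] → ℝ be continuous with f(x) ≠ 0 for all x ∈ [0,1]. If dim_B̄ G(f) = β, then there exist continuous g, h : [0,1] → ℝ with f = g·h and dim_B̄ G(g) = dim_B̄ G(h) = β. -/

import Mathlib

open Set Filter Metric

noncomputable def coverNum {α : Type*} [PseudoMetricSpace α] (F : Set α) (δ : ℝ) : ℕ :=
  sInf {n : ℕ | ∃ t : Finset α, t.card = n ∧ F ⊆ ⋃ p ∈ t, Metric.closedBall p δ}

noncomputable def upperBoxDim {α : Type*} [PseudoMetricSpace α] (F : Set α) : ℝ :=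
  Filter.limsup (fun δ : ℝ => Real.log (coverNum F δ) / -Real.log δ)
    (nhdsWithin (0 : ℝ) (Set.Ioi 0))

noncomputable def lowerBoxDim {α : Type*} [PseudoMetricSpace α] (F : Set α) : ℝ :=
  Filter.liminf (fun δ : ℝ => Real.log (coverNum F δ) / -Real.log δ)
    (nhdsWithin (0 : ℝ) (Set.Ioi 0))

/-- Graph of `f` over the set `X`. -/
def fnGraphOn (f : ℝ → ℝ) (X : Set ℝ) : Set (ℝ × ℝ) := (fun x => (x, f x)) '' X

/-- Graph of `f` over `[0,1]`. -/
def G (f : ℝ → ℝ) : Set (ℝ × ℝ) := fnGraphOn f (Set.Icc 0 1)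

private lemma log_nat_mono {m n : ℕ} (h : m ≤ n) : Real.log m ≤ Real.log n := by
  rcases Nat.eq_zero_or_pos m with rfl | hm
  · simpa using Real.log_natCast_nonneg n
  · exact Real.log_le_log (by exact_mod_cast hm) (by exact_mod_cast h)

private lemma coverNum_le_card {α : Type*} [PseudoMetricSpace α] {F : Set α} {δ : ℝ}
    (t : Finset α) (h : F ⊆ ⋃ p ∈ t, Metric.closedBall p δ) : coverNum F δ ≤ t.card :=
  Nat.sInf_le ⟨t, rfl, h⟩

private lemma exists_cover {α : Type*} [PseudoMetricSpace α] {F : Set α} (hF : IsCompact F)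
    {δ : ℝ} (hδ : 0 < δ) : ∃ t : Finset α, F ⊆ ⋃ p ∈ t, Metric.closedBall p δ := by
  obtain ⟨s, hsfin, hsub⟩ := (totallyBounded_iff.1 hF.totallyBounded) δ hδ
  refine ⟨hsfin.toFinset, hsub.trans ?_⟩
  intro x hx
  simp only [Set.mem_iUnion, exists_prop] at hx ⊢
  obtain ⟨y, hy, hxy⟩ := hx
  exact ⟨y, by simpa using hy, Metric.ball_subset_closedBall hxy⟩

private lemma coverNum_image_le {α β : Type*} [PseudoMetricSpace α] [PseudoMetricSpace β]
    {F : Set α} (hF : IsCompact F) {Φ : α → β} {K δ : ℝ} (hK : 1 ≤ K)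
    (hΦ : ∀ x ∈ F, ∀ y ∈ F, dist (Φ x) (Φ y) ≤ K * dist x y) (hδ : 0 < δ) :
    coverNum (Φ '' F) (2 * K * δ) ≤ coverNum F δ := by
  classical
  obtain ⟨t₀, ht₀⟩ := exists_cover hF hδ
  have hSne : {n : ℕ | ∃ t : Finset α, t.card = n ∧ F ⊆ ⋃ p ∈ t, Metric.closedBall p δ}.Nonempty :=
    ⟨t₀.card, t₀, rfl, ht₀⟩
  refine le_csInf hSne ?_
  rintro n ⟨t, rfl, hcov⟩
  set pick : α → α := fun p =>
    if h : ∃ x, x ∈ F ∧ x ∈ Metric.closedBall p δ then h.choose else p with hpick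
  refine le_trans (coverNum_le_card (t.image (fun p => Φ (pick p))) ?_) Finset.card_image_le
  rintro y ⟨x, hxF, rfl⟩
  have hx' := hcov hxF
  simp only [Set.mem_iUnion, exists_prop] at hx'
  obtain ⟨p, hp, hxp⟩ := hx'
  have hex : ∃ x', x' ∈ F ∧ x' ∈ Metric.closedBall p δ := ⟨x, hxF, hxp⟩
  have hpick_eq : pick p = hex.choose := by simp only [hpick, dif_pos hex]
  obtain ⟨hcF, hcB⟩ := hex.choose_spec
  have hdist : dist x (pick p) ≤ 2 * δ := by
    rw [hpick_eq]
    calc dist x hex.choose ≤ dist x p + dist p hex.choose := dist_triangle _ _ _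
    _ ≤ δ + δ := by
        have h1 : dist x p ≤ δ := Metric.mem_closedBall.1 hxp
        have h2 : dist hex.choose p ≤ δ := Metric.mem_closedBall.1 hcB
        rw [dist_comm p hex.choose]; linarith
    _ = 2 * δ := by ring
  have hdist2 : dist (Φ x) (Φ (pick p)) ≤ 2 * K * δ := by
    have hF' : pick p ∈ F := hpick_eq ▸ hcF
    calc dist (Φ x) (Φ (pick p)) ≤ K * dist x (pick p) := hΦ x hxF _ hF'
    _ ≤ K * (2 * δ) := mul_le_mul_of_nonneg_left hdist (by linarith)
    _ = 2 * K * δ := by ring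
  simp only [Set.mem_iUnion, exists_prop, Finset.mem_image]
  exact ⟨Φ (pick p), ⟨p, hp, rfl⟩, Metric.mem_closedBall.2 hdist2⟩

private lemma key {α : Type*} [PseudoMetricSpace α] (F₁ F₂ : Set α) (c : ℝ) (hc : 1 ≤ c)
    (H : ∀ δ : ℝ, 0 < δ → coverNum F₂ (c * δ) ≤ coverNum F₁ δ)
    (a ε : ℝ) (hε : 0 < ε)
    (hU : ∀ᶠ δ in nhdsWithin (0:ℝ) (Set.Ioi 0), Real.log (coverNum F₁ δ) / -Real.log δ ≤ a) :
    ∀ᶠ δ in nhdsWithin (0:ℝ) (Set.Ioi 0), Real.log (coverNum F₂ δ) / -Real.log δ ≤ a + ε := by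
  obtain ⟨δ₁, hδ₁pos, hsub⟩ := mem_nhdsGT_iff_exists_Ioo_subset.1 hU
  rw [Set.mem_Ioi] at hδ₁pos
  have hc0 : (0:ℝ) < c := lt_of_lt_of_le one_pos hc
  set M : ℝ := max 1 (a * Real.log c / ε) with hM
  set u : ℝ := min (c * min δ₁ 1) (Real.exp (-M)) with hu
  have hupos : 0 < u := lt_min (by positivity) (Real.exp_pos _)
  filter_upwards [Ioo_mem_nhdsGT_of_mem (show (0:ℝ) ∈ Set.Ico 0 u from ⟨le_refl _, hupos⟩)]
    with δ hδ
  obtain ⟨hδ0, hδu⟩ := hδ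
  set δ' := δ / c with hδ'def
  have hδ'0 : 0 < δ' := div_pos hδ0 hc0
  have hδ'lt : δ' < min δ₁ 1 := by
    rw [hδ'def, div_lt_iff₀ hc0]
    calc δ < c * min δ₁ 1 := lt_of_lt_of_le hδu (min_le_left _ _)
    _ = min δ₁ 1 * c := mul_comm _ _
  have h1 : Real.log (coverNum F₁ δ') / -Real.log δ' ≤ a :=
    hsub ⟨hδ'0, lt_of_lt_of_le hδ'lt (min_le_left _ _)⟩
  have hlogδ'neg : Real.log δ' < 0 := Real.log_neg hδ'0 (lt_of_lt_of_le hδ'lt (min_le_right _ _))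
  have h2 : Real.log (coverNum F₁ δ') ≤ a * -Real.log δ' := by
    rw [div_le_iff₀ (by linarith : (0:ℝ) < -Real.log δ')] at h1
    linarith [h1]
  have hNle : coverNum F₂ δ ≤ coverNum F₁ δ' := by
    have := H δ' hδ'0
    rwa [show c * δ' = δ by rw [hδ'def]; field_simp] at this
  have h3 : Real.log (coverNum F₂ δ) ≤ a * -Real.log δ' := le_trans (log_nat_mono hNle) h2
  have hlogδ : Real.log δ < -M := by
    have h := Real.log_lt_log hδ0 (lt_of_lt_of_le hδu (min_le_right _ _))
    simpa using h
  have hM1 : (1:ℝ) ≤ M := le_max_left _ _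
  have hnegpos : (0:ℝ) < -Real.log δ := by linarith
  have hlogδ'eq : Real.log δ' = Real.log δ - Real.log c :=
    Real.log_div (ne_of_gt hδ0) (ne_of_gt hc0)
  have halc : a * Real.log c ≤ ε * -Real.log δ := by
    have hMε : a * Real.log c / ε ≤ M := le_max_right _ _
    have h5 : a * Real.log c ≤ M * ε := by
      rw [div_le_iff₀ hε] at hMε; linarith
    have hMlt : M < -Real.log δ := by linarith
    have := mul_lt_mul_of_pos_right hMlt hε
    linarith [this]
  have e1 : a * -Real.log δ' = a * -Real.log δ + a * Real.log c := by
    rw [hlogδ'eq]; ring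
  have h6 : Real.log (coverNum F₂ δ) ≤ a * -Real.log δ + ε * -Real.log δ := by linarith
  rw [div_le_iff₀ hnegpos]
  have e2 : (a + ε) * -Real.log δ = a * -Real.log δ + ε * -Real.log δ := by ring
  linarith

private lemma u_nonneg {α : Type*} [PseudoMetricSpace α] (F : Set α) :
    ∀ᶠ δ in nhdsWithin (0:ℝ) (Set.Ioi 0), 0 ≤ Real.log (coverNum F δ) / -Real.log δ := by
  filter_upwards [Ioo_mem_nhdsGT_of_mem (show (0:ℝ) ∈ Set.Ico 0 1 from ⟨le_refl _, one_pos⟩)]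
    with δ hδ
  have := Real.log_neg hδ.1 hδ.2
  exact div_nonneg (Real.log_natCast_nonneg _) (by linarith)

private lemma dim_le {α : Type*} [PseudoMetricSpace α] (F₁ F₂ : Set α) (c : ℝ) (hc : 1 ≤ c)
    (H : ∀ δ : ℝ, 0 < δ → coverNum F₂ (c * δ) ≤ coverNum F₁ δ)
    (hb : IsBoundedUnder (fun x y : ℝ => x ≤ y) (nhdsWithin (0:ℝ) (Set.Ioi 0))
      (fun δ => Real.log (coverNum F₁ δ) / -Real.log δ)) :
    upperBoxDim F₂ ≤ upperBoxDim F₁ ∧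
    IsBoundedUnder (fun x y : ℝ => x ≤ y) (nhdsWithin (0:ℝ) (Set.Ioi 0))
      (fun δ => Real.log (coverNum F₂ δ) / -Real.log δ) := by
  obtain ⟨a, ha⟩ := hb
  have ha' : ∀ᶠ δ in nhdsWithin (0:ℝ) (Set.Ioi 0),
      Real.log (coverNum F₁ δ) / -Real.log δ ≤ a := eventually_map.1 ha
  have hcob : Filter.IsCoboundedUnder (fun x y : ℝ => x ≤ y) (nhdsWithin (0:ℝ) (Set.Ioi 0))
      (fun δ => Real.log (coverNum F₂ δ) / -Real.log δ) :=
    Filter.IsCoboundedUnder.of_frequently_ge (u_nonneg F₂).frequently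
  constructor
  · refine le_of_forall_pos_le_add fun ε hε => ?_
    have hlt : Filter.limsup (fun δ : ℝ => Real.log (coverNum F₁ δ) / -Real.log δ)
        (nhdsWithin (0:ℝ) (Set.Ioi 0)) < upperBoxDim F₁ + ε / 2 := by
      rw [upperBoxDim]; linarith
    have hev := Filter.eventually_lt_of_limsup_lt hlt ⟨a, ha⟩
    have hev' := key F₁ F₂ c hc H (upperBoxDim F₁ + ε / 2) (ε / 2) (by linarith)
      (hev.mono fun δ h => le_of_lt h)
    rw [upperBoxDim]
    have hev'' : ∀ᶠ δ in nhdsWithin (0:ℝ) (Set.Ioi 0),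
        Real.log (coverNum F₂ δ) / -Real.log δ ≤ upperBoxDim F₁ + ε :=
      hev'.mono fun δ h => by linarith
    exact Filter.limsup_le_of_le hcob hev''
  · exact ⟨a + 1, eventually_map.2 (key F₁ F₂ c hc H a 1 one_pos ha')⟩

private lemma dim_eq {α : Type*} [PseudoMetricSpace α] {F₁ F₂ : Set α}
    (h₁ : IsCompact F₁) (h₂ : IsCompact F₂) (Φ Ψ : α → α) (K : ℝ) (hK : 1 ≤ K)
    (hΦ : ∀ p ∈ F₁, ∀ q ∈ F₁, dist (Φ p) (Φ q) ≤ K * dist p q) (hΦim : Φ '' F₁ = F₂)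
    (hΨ : ∀ p ∈ F₂, ∀ q ∈ F₂, dist (Ψ p) (Ψ q) ≤ K * dist p q) (hΨim : Ψ '' F₂ = F₁)
    (hb : IsBoundedUnder (fun x y : ℝ => x ≤ y) (nhdsWithin (0:ℝ) (Set.Ioi 0))
      (fun δ => Real.log (coverNum F₁ δ) / -Real.log δ)) :
    upperBoxDim F₂ = upperBoxDim F₁ ∧
    IsBoundedUnder (fun x y : ℝ => x ≤ y) (nhdsWithin (0:ℝ) (Set.Ioi 0))
      (fun δ => Real.log (coverNum F₂ δ) / -Real.log δ) := by
  have H : ∀ δ : ℝ, 0 < δ → coverNum F₂ (2 * K * δ) ≤ coverNum F₁ δ := fun δ hδ => by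
    rw [← hΦim]; exact coverNum_image_le h₁ hK hΦ hδ
  have H' : ∀ δ : ℝ, 0 < δ → coverNum F₁ (2 * K * δ) ≤ coverNum F₂ δ := fun δ hδ => by
    rw [← hΨim]; exact coverNum_image_le h₂ hK hΨ hδ
  have h2K : 1 ≤ 2 * K := by linarith
  obtain ⟨le₁, b₂⟩ := dim_le F₁ F₂ (2 * K) h2K H hb
  obtain ⟨le₂, -⟩ := dim_le F₂ F₁ (2 * K) h2K H' b₂
  exact ⟨le_antisymm le₁ le₂, b₂⟩

private lemma prod_lip {S : Set (ℝ × ℝ)} {φ : ℝ → ℝ} {c K : ℝ} (hc : 0 ≤ c) (hcK : c ≤ K)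
    (hK : 1 ≤ K) (hφ : ∀ p ∈ S, ∀ q ∈ S, dist (φ p.2) (φ q.2) ≤ c * dist p.2 q.2) :
    ∀ p ∈ S, ∀ q ∈ S,
      dist ((fun p : ℝ × ℝ => (p.1, φ p.2)) p) ((fun p : ℝ × ℝ => (p.1, φ p.2)) q)
        ≤ K * dist p q := by
  intro p hp q hq
  have hd1 : dist p.1 q.1 ≤ dist p q := by rw [Prod.dist_eq]; exact le_max_left _ _
  have hd2 : dist p.2 q.2 ≤ dist p q := by rw [Prod.dist_eq]; exact le_max_right _ _
  have hKd : 0 ≤ dist p q := dist_nonneg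
  simp only [Prod.dist_eq]
  refine sup_le ?_ ?_
  · calc dist p.1 q.1 ≤ dist p q := hd1
    _ ≤ K * dist p q := le_mul_of_one_le_left hKd hK
  · calc dist (φ p.2) (φ q.2) ≤ c * dist p.2 q.2 := hφ p hp q hq
    _ ≤ c * dist p q := mul_le_mul_of_nonneg_left hd2 hc
    _ ≤ K * dist p q := mul_le_mul_of_nonneg_right hcK hKd

private lemma sqrt_lip {m a b : ℝ} (hm : 0 < m) (ha : m ≤ a) (hb : m ≤ b) :
    |Real.sqrt a - Real.sqrt b| ≤ |a - b| / (2 * Real.sqrt m) := by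
  have hsm : 0 < Real.sqrt m := Real.sqrt_pos.2 hm
  have ha0 : 0 ≤ a := le_trans hm.le ha
  have hb0 : 0 ≤ b := le_trans hm.le hb
  have hsum : 2 * Real.sqrt m ≤ Real.sqrt a + Real.sqrt b := by
    have h1 := Real.sqrt_le_sqrt ha
    have h2 := Real.sqrt_le_sqrt hb
    linarith
  rw [le_div_iff₀ (by positivity)]
  have hkey : |Real.sqrt a - Real.sqrt b| * (Real.sqrt a + Real.sqrt b) = |a - b| := by
    rw [← abs_of_nonneg (show (0:ℝ) ≤ Real.sqrt a + Real.sqrt b by positivity), ← abs_mul]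
    congr 1
    have e : (Real.sqrt a - Real.sqrt b) * (Real.sqrt a + Real.sqrt b)
        = Real.sqrt a * Real.sqrt a - Real.sqrt b * Real.sqrt b := by ring
    rw [e, Real.mul_self_sqrt ha0, Real.mul_self_sqrt hb0]
  calc |Real.sqrt a - Real.sqrt b| * (2 * Real.sqrt m)
      ≤ |Real.sqrt a - Real.sqrt b| * (Real.sqrt a + Real.sqrt b) :=
        mul_le_mul_of_nonneg_left hsum (abs_nonneg _)
  _ = |a - b| := hkey

private lemma sq_lip {R a b : ℝ} (ha0 : 0 ≤ a) (hb0 : 0 ≤ b) (haR : a ≤ R) (hbR : b ≤ R) :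
    |a ^ 2 - b ^ 2| ≤ 2 * R * |a - b| := by
  have e : a ^ 2 - b ^ 2 = (a + b) * (a - b) := by ring
  rw [e, abs_mul]
  have h : |a + b| ≤ 2 * R := by rw [abs_of_nonneg (by linarith)]; linarith
  exact mul_le_mul_of_nonneg_right h (abs_nonneg _)

theorem decomposition_eq_case (β : ℝ) (hβ : β ∈ Set.Icc (1:ℝ) 2) (f : ℝ → ℝ)
    (hf : ContinuousOn f (Set.Icc 0 1)) (hne : ∀ x ∈ Set.Icc (0:ℝ) 1, f x ≠ 0)
    (hdim : upperBoxDim (G f) = β) :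
    ∃ g h : ℝ → ℝ, ContinuousOn g (Set.Icc 0 1) ∧ ContinuousOn h (Set.Icc 0 1) ∧
      (∀ x ∈ Set.Icc (0:ℝ) 1, f x = g x * h x) ∧
      upperBoxDim (G g) = β ∧ upperBoxDim (G h) = β := by
  obtain ⟨hβ1, hβ2⟩ := hβ
  have h01 : (0:ℝ) ∈ Set.Icc (0:ℝ) 1 := ⟨le_refl _, zero_le_one⟩
  have hGf : IsCompact (G f) :=
    isCompact_Icc.image_of_continuousOn (continuousOn_id.prodMk hf)
  -- min and max of |f| on [0,1]
  obtain ⟨x₀, hx₀, hmin⟩ := isCompact_Icc.exists_isMinOn ⟨0, h01⟩ hf.abs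
  obtain ⟨x₁, hx₁, hmax⟩ := isCompact_Icc.exists_isMaxOn ⟨0, h01⟩ hf.abs
  set m := |f x₀| with hmdef
  set Mv := |f x₁| with hMvdef
  have hm0 : 0 < m := abs_pos.2 (hne x₀ hx₀)
  have hmle : ∀ x ∈ Set.Icc (0:ℝ) 1, m ≤ |f x| := fun x hx => hmin hx
  have hMge : ∀ x ∈ Set.Icc (0:ℝ) 1, |f x| ≤ Mv := fun x hx => hmax hx
  set r : ℝ → ℝ := fun x => Real.sqrt |f x| with hrdef
  have hrc : ContinuousOn r (Set.Icc 0 1) := Real.continuous_sqrt.comp_continuousOn hf.abs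
  have hGr : IsCompact (G r) :=
    isCompact_Icc.image_of_continuousOn (continuousOn_id.prodMk hrc)
  have hr_ub : ∀ x ∈ Set.Icc (0:ℝ) 1, r x ≤ Real.sqrt Mv :=
    fun x hx => Real.sqrt_le_sqrt (hMge x hx)
  have hr_nonneg : ∀ x : ℝ, 0 ≤ r x := fun x => Real.sqrt_nonneg _
  -- boundedness of the counting function for G f
  have hb : IsBoundedUnder (fun x y : ℝ => x ≤ y) (nhdsWithin (0:ℝ) (Set.Ioi 0))
      (fun δ => Real.log (coverNum (G f) δ) / -Real.log δ) := by
    by_contra hnb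
    have hempty : {a : ℝ | ∀ᶠ δ in nhdsWithin (0:ℝ) (Set.Ioi 0),
        Real.log (coverNum (G f) δ) / -Real.log δ ≤ a} = ∅ :=
      Set.eq_empty_iff_forall_notMem.2 fun a ha => hnb ⟨a, eventually_map.2 ha⟩
    have h0 : upperBoxDim (G f) = 0 := by
      rw [upperBoxDim, Filter.limsup_eq, hempty, Real.sInf_empty]
    rw [hdim] at h0; linarith
  -- the Lipschitz constant
  set K : ℝ := max 1 (max (1 / (2 * Real.sqrt m)) (2 * Real.sqrt Mv)) with hKdef
  have hK1 : 1 ≤ K := le_max_left _ _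
  have hc1K : 1 / (2 * Real.sqrt m) ≤ K := le_trans (le_max_left _ _) (le_max_right _ _)
  have hc2K : 2 * Real.sqrt Mv ≤ K := le_trans (le_max_right _ _) (le_max_right _ _)
  have hc1 : 0 ≤ 1 / (2 * Real.sqrt m) := by positivity
  have hc2 : 0 ≤ 2 * Real.sqrt Mv := by positivity
  -- the sqrt map from G f to G r
  have hΦ : ∀ p ∈ G f, ∀ q ∈ G f,
      dist ((fun p : ℝ × ℝ => (p.1, Real.sqrt |p.2|)) p)
        ((fun p : ℝ × ℝ => (p.1, Real.sqrt |p.2|)) q) ≤ K * dist p q := by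
    refine prod_lip (φ := fun y => Real.sqrt |y|) hc1 hc1K hK1 ?_
    rintro p ⟨x, hx, rfl⟩ q ⟨y, hy, rfl⟩
    calc dist (Real.sqrt |f x|) (Real.sqrt |f y|)
        = abs (Real.sqrt |f x| - Real.sqrt |f y|) := Real.dist_eq _ _
    _ ≤ abs (|f x| - |f y|) / (2 * Real.sqrt m) := sqrt_lip hm0 (hmle x hx) (hmle y hy)
    _ ≤ |f x - f y| / (2 * Real.sqrt m) := by
        apply div_le_div_of_nonneg_right (abs_abs_sub_abs_le_abs_sub _ _)
        positivity
    _ = 1 / (2 * Real.sqrt m) * dist (f x) (f y) := by rw [Real.dist_eq]; ring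
  have hΦim : (fun p : ℝ × ℝ => (p.1, Real.sqrt |p.2|)) '' G f = G r := by
    simp only [G, fnGraphOn, Set.image_image]
    rfl
  -- sign dichotomy
  have hsign : (∀ x ∈ Set.Icc (0:ℝ) 1, 0 < f x) ∨ (∀ x ∈ Set.Icc (0:ℝ) 1, f x < 0) := by
    rcases (hne 0 h01).lt_or_gt with h0neg | h0pos
    · right
      intro x hx
      by_contra hle
      push_neg at hle
      have hfx : 0 < f x := lt_of_le_of_ne hle (Ne.symm (hne x hx))
      have hsubI : Set.uIcc (0:ℝ) x ⊆ Set.Icc 0 1 := by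
        rw [Set.uIcc_of_le hx.1]
        exact Set.Icc_subset_Icc (le_refl _) hx.2
      have hmem : (0:ℝ) ∈ Set.uIcc (f 0) (f x) := by
        rw [Set.mem_uIcc]; left; exact ⟨h0neg.le, hfx.le⟩
      obtain ⟨c', hc', hfc'⟩ := intermediate_value_uIcc (hf.mono hsubI) hmem
      exact hne c' (hsubI hc') hfc'
    · left
      intro x hx
      by_contra hle
      push_neg at hle
      have hfx : f x < 0 := lt_of_le_of_ne hle (hne x hx)
      have hsubI : Set.uIcc (0:ℝ) x ⊆ Set.Icc 0 1 := by
        rw [Set.uIcc_of_le hx.1]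
        exact Set.Icc_subset_Icc (le_refl _) hx.2
      have hmem : (0:ℝ) ∈ Set.uIcc (f 0) (f x) := by
        rw [Set.mem_uIcc]; right; exact ⟨hfx.le, h0pos.le⟩
      obtain ⟨c', hc', hfc'⟩ := intermediate_value_uIcc (hf.mono hsubI) hmem
      exact hne c' (hsubI hc') hfc'
  rcases hsign with hpos | hneg
  · -- positive case : g = h = r
    have hΨ : ∀ p ∈ G r, ∀ q ∈ G r,
        dist ((fun p : ℝ × ℝ => (p.1, p.2 ^ 2)) p)
          ((fun p : ℝ × ℝ => (p.1, p.2 ^ 2)) q) ≤ K * dist p q := by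
      refine prod_lip (φ := fun y => y ^ 2) hc2 hc2K hK1 ?_
      rintro p ⟨x, hx, rfl⟩ q ⟨y, hy, rfl⟩
      calc dist ((r x) ^ 2) ((r y) ^ 2) = |(r x) ^ 2 - (r y) ^ 2| := Real.dist_eq _ _
      _ ≤ 2 * Real.sqrt Mv * |r x - r y| :=
          sq_lip (hr_nonneg x) (hr_nonneg y) (hr_ub x hx) (hr_ub y hy)
      _ = 2 * Real.sqrt Mv * dist (r x) (r y) := by rw [Real.dist_eq]
    have hΨim : (fun p : ℝ × ℝ => (p.1, p.2 ^ 2)) '' G r = G f := by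
      simp only [G, fnGraphOn, Set.image_image]
      refine Set.image_congr fun x hx => ?_
      have : (r x) ^ 2 = f x := by
        rw [hrdef]
        simp only []
        rw [Real.sq_sqrt (abs_nonneg _), abs_of_pos (hpos x hx)]
      rw [this]
    obtain ⟨heq, -⟩ := dim_eq hGf hGr _ _ K hK1 hΦ hΦim hΨ hΨim hb
    refine ⟨r, r, hrc, hrc, fun x hx => ?_, by rw [heq, hdim], by rw [heq, hdim]⟩
    rw [hrdef]
    simp only []
    rw [Real.mul_self_sqrt (abs_nonneg _), abs_of_pos (hpos x hx)]
  · -- negative case : g = -r, h = r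
    have hΨ : ∀ p ∈ G r, ∀ q ∈ G r,
        dist ((fun p : ℝ × ℝ => (p.1, -(p.2 ^ 2))) p)
          ((fun p : ℝ × ℝ => (p.1, -(p.2 ^ 2))) q) ≤ K * dist p q := by
      refine prod_lip (φ := fun y => -(y ^ 2)) hc2 hc2K hK1 ?_
      rintro p ⟨x, hx, rfl⟩ q ⟨y, hy, rfl⟩
      calc dist (-((r x) ^ 2)) (-((r y) ^ 2)) = dist ((r x) ^ 2) ((r y) ^ 2) := dist_neg_neg _ _
      _ = |(r x) ^ 2 - (r y) ^ 2| := Real.dist_eq _ _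
      _ ≤ 2 * Real.sqrt Mv * |r x - r y| :=
          sq_lip (hr_nonneg x) (hr_nonneg y) (hr_ub x hx) (hr_ub y hy)
      _ = 2 * Real.sqrt Mv * dist (r x) (r y) := by rw [Real.dist_eq]
    have habs : ∀ x ∈ Set.Icc (0:ℝ) 1, (r x) ^ 2 = -f x := fun x hx => by
      rw [hrdef]
      simp only []
      rw [Real.sq_sqrt (abs_nonneg _), abs_of_neg (hneg x hx)]
    have hΨim : (fun p : ℝ × ℝ => (p.1, -(p.2 ^ 2))) '' G r = G f := by
      simp only [G, fnGraphOn, Set.image_image]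
      refine Set.image_congr fun x hx => ?_
      rw [habs x hx, neg_neg]
    obtain ⟨heq, hbr⟩ := dim_eq hGf hGr _ _ K hK1 hΦ hΦim hΨ hΨim hb
    -- now G (-r) via the reflection
    set g : ℝ → ℝ := fun x => -(r x) with hgdef
    have hgc : ContinuousOn g (Set.Icc 0 1) := hrc.neg
    have hGg : IsCompact (G g) :=
      isCompact_Icc.image_of_continuousOn (continuousOn_id.prodMk hgc)
    have hν : ∀ p ∈ G r, ∀ q ∈ G r,
        dist ((fun p : ℝ × ℝ => (p.1, -p.2)) p)
          ((fun p : ℝ × ℝ => (p.1, -p.2)) q) ≤ K * dist p q := by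
      refine prod_lip (φ := fun y => -y) zero_le_one (le_trans (le_refl _) hK1) hK1 ?_
      intro p _ q _
      rw [dist_neg_neg, one_mul]
    have hν' : ∀ p ∈ G g, ∀ q ∈ G g,
        dist ((fun p : ℝ × ℝ => (p.1, -p.2)) p)
          ((fun p : ℝ × ℝ => (p.1, -p.2)) q) ≤ K * dist p q := by
      refine prod_lip (φ := fun y => -y) zero_le_one (le_trans (le_refl _) hK1) hK1 ?_
      intro p _ q _
      rw [dist_neg_neg, one_mul]
    have hνim : (fun p : ℝ × ℝ => (p.1, -p.2)) '' G r = G g := by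
      simp only [G, fnGraphOn, Set.image_image]
      rfl
    have hνim' : (fun p : ℝ × ℝ => (p.1, -p.2)) '' G g = G r := by
      simp only [G, fnGraphOn, Set.image_image]
      exact Set.image_congr fun x _ => by rw [hgdef]; simp
    obtain ⟨heq2, -⟩ := dim_eq hGr hGg _ _ K hK1 hν hνim hν' hνim' hbr
    refine ⟨g, r, hgc, hrc, fun x hx => ?_, by rw [heq2, heq, hdim], by rw [heq, hdim]⟩
    have := habs x hx
    rw [hgdef]
    simp only []
    nlinarith [this]
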